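/- arXiv:2102.06633 — 4 statements merged into one kernel-verified Lean document; each statement's English description precedes it below -/
import Mathlib

section
/- Let L be the random-walk normalized Laplacian of a simple, connected, undirected graph on N ≥ 2 nodes, with maximum degree d_max and minimum degree d_min. Let L̄ be the grounded Laplacian obtained by deleting the row and column of L corresponding to node 1. Then the smallest eigenvalue λ̄₁ of L̄ satisfies λ̄₁ ≤ d_max / ((N−1)·d_min). -/
open Matrix Finset

/-- Symmetric normalized Laplacian of a graph: `L_sym = I - D^{-1/2} A D^{-1/2}`. -/
noncomputable def Lsym {N : ℕ} (G : SimpleGraph (Fin N)) [DecidableRel G.Adj] :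
    Matrix (Fin N) (Fin N) ℝ := fun i j =>
  (if i = j then (1 : ℝ) else 0) -
    G.adjMatrix ℝ i j / Real.sqrt ((G.degree i : ℝ) * (G.degree j : ℝ))

/-- `μ` is a (real) eigenvalue of the real matrix `M`. -/
def IsEig {n : ℕ} (M : Matrix (Fin n) (Fin n) ℝ) (μ : ℝ) : Prop :=
  Module.End.HasEigenvalue (Matrix.toLin' M) μ

lemma isEig_of_euclidean {m : ℕ} (M : Matrix (Fin m) (Fin m) ℝ) {μ : ℝ}
    (h : Module.End.HasEigenvalue (Matrix.toEuclideanLin M) μ) : IsEig M μ := by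
  obtain ⟨v, hv⟩ := h.exists_hasEigenvector
  refine Module.End.hasEigenvalue_of_hasEigenvector
    (x := (WithLp.equiv 2 (Fin m → ℝ)) v) ⟨?_, ?_⟩
  · rw [Module.End.mem_eigenspace_iff]
    exact congrArg (WithLp.equiv 2 (Fin m → ℝ)) (Module.End.mem_eigenspace_iff.mp hv.1)
  · simpa using (WithLp.equiv 2 (Fin m → ℝ)).injective.ne hv.2

/-- For a simple connected undirected graph on `N = n + 2 ≥ 2` nodes, the
smallest eigenvalue `λ̄₁` of the grounded (normalized) Laplacian, obtained by deleting the
row and column of node `0`, satisfies `λ̄₁ ≤ d_max / ((N - 1) * d_min)`. -/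
theorem grounded_lambda1_upper_bound {n : ℕ} (G : SimpleGraph (Fin (n + 2)))
    [DecidableRel G.Adj] (hconn : G.Connected)
    (dmax dmin : ℕ)
    (hdmax : dmax = univ.sup' univ_nonempty (fun i => G.degree i))
    (hdmin : dmin = univ.inf' univ_nonempty (fun i => G.degree i))
    (lam1 : ℝ)
    (heig : IsEig ((Lsym G).submatrix Fin.succ Fin.succ) lam1)
    (hmin : ∀ μ : ℝ, IsEig ((Lsym G).submatrix Fin.succ Fin.succ) μ → lam1 ≤ μ) :
    lam1 ≤ (dmax : ℝ) / (((n + 1 : ℕ) : ℝ) * (dmin : ℝ)) := by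
  classical
  set M : Matrix (Fin (n+1)) (Fin (n+1)) ℝ := (Lsym G).submatrix Fin.succ Fin.succ with hMdef
  -- degrees are positive
  have hdeg : ∀ v : Fin (n+2), 0 < G.degree v := by
    intro v
    rw [SimpleGraph.degree_pos_iff_exists_adj]
    obtain ⟨u, hu⟩ := exists_ne v
    obtain ⟨p⟩ := hconn.preconnected v u
    cases p with
    | nil => exact absurd rfl hu
    | cons h _ => exact ⟨_, h⟩
  have hdegR : ∀ v : Fin (n+2), (0:ℝ) < (G.degree v : ℝ) := fun v => by exact_mod_cast hdeg v
  set s : Fin (n+2) → ℝ := fun v => Real.sqrt (G.degree v) with hsdef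
  have hspos : ∀ v, 0 < s v := fun v => Real.sqrt_pos.mpr (hdegR v)
  have hssq : ∀ v, s v * s v = (G.degree v : ℝ) := fun v =>
    Real.mul_self_sqrt (le_of_lt (hdegR v))
  -- symmetry of Lsym
  have hLs : ∀ a b, Lsym G a b = Lsym G b a := by
    intro a b
    simp only [Lsym, SimpleGraph.adjMatrix_apply]
    have h2 : G.Adj a b ↔ G.Adj b a := G.adj_comm a b
    rw [mul_comm (G.degree a : ℝ)]
    congr 1
    · by_cases hab : a = b
      · simp [hab]
      · simp [hab, Ne.symm hab]
    · congr 1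
      simp only [h2]
  have hherm : M.IsHermitian := by
    ext i j
    simp only [Matrix.conjTranspose_apply, Matrix.submatrix_apply, star_trivial, hMdef]
    exact hLs _ _
  have hsymm := Matrix.isHermitian_iff_isSymmetric.mp hherm
  -- the test vector
  set x₀ : EuclideanSpace ℝ (Fin (n+1)) :=
    (WithLp.equiv 2 (Fin (n+1) → ℝ)).symm (fun i => s i.succ) with hx₀def
  have hx₀ : x₀ ≠ 0 := by
    intro h
    have h0 : s ((0 : Fin (n+1)).succ) = 0 := by
      have := congrArg (fun y => (WithLp.equiv 2 (Fin (n+1) → ℝ)) y (0 : Fin (n+1))) h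
      simpa [hx₀def] using this
    exact (hspos _).ne' h0
  haveI : Nontrivial (EuclideanSpace ℝ (Fin (n+1))) := ⟨x₀, 0, hx₀⟩
  have key := hsymm.hasEigenvalue_iInf_of_finiteDimensional
  set c : ℝ := ⨅ x : {x : EuclideanSpace ℝ (Fin (n+1)) // x ≠ 0},
      RCLike.re (inner ℝ ((Matrix.toEuclideanLin M) x.1) x.1 : ℝ) / ‖x.1‖ ^ 2 with hcdef
  have hkey : IsEig M c := isEig_of_euclidean M (by simpa [hcdef] using key)
  have hlam : lam1 ≤ c := hmin c hkey
  -- row sums of the adjacency matrix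
  have hrow : ∀ v : Fin (n+2), ∑ k, G.adjMatrix ℝ v k = (G.degree v : ℝ) := by
    intro v
    simp [SimpleGraph.neighborFinset_eq_filter, SimpleGraph.degree]
  have hsucc : ∀ v : Fin (n+2), ∑ j : Fin (n+1), G.adjMatrix ℝ v j.succ
      = (G.degree v : ℝ) - G.adjMatrix ℝ v 0 := by
    intro v
    have h1 := Fin.sum_univ_succ (f := fun k => G.adjMatrix ℝ v k)
    rw [hrow v] at h1
    linarith
  -- the matrix-vector product
  have hmul : ∀ i : Fin (n+1),
      (M *ᵥ fun j => s j.succ) i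
        = s i.succ - ((G.degree i.succ : ℝ) - G.adjMatrix ℝ i.succ 0) / s i.succ := by
    intro i
    have hterm : ∀ j : Fin (n+1), M i j * s j.succ
        = (if i = j then s i.succ else 0) - G.adjMatrix ℝ i.succ j.succ / s i.succ := by
      intro j
      simp only [hMdef, Matrix.submatrix_apply, Lsym]
      rw [Real.sqrt_mul (hdegR i.succ).le, sub_mul]
      congr 1
      · by_cases h : i = j
        · subst h; simp [hsdef]
        · have h' : i.succ ≠ j.succ := fun hh => h (Fin.succ_injective _ hh)
          simp [h, h']
      · have ha : Real.sqrt ((G.degree i.succ : ℝ)) ≠ 0 := (hspos i.succ).ne'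
        have hb : Real.sqrt ((G.degree j.succ : ℝ)) ≠ 0 := (hspos j.succ).ne'
        simp only [hsdef]
        field_simp
    have hmv : (M *ᵥ fun j => s j.succ) i = ∑ j, M i j * s j.succ := rfl
    rw [hmv, Finset.sum_congr rfl (fun j _ => hterm j), Finset.sum_sub_distrib,
      Finset.sum_ite_eq univ i (fun _ => s i.succ), if_pos (Finset.mem_univ i),
      ← Finset.sum_div, hsucc i.succ]
  -- the inner product
  have happ : ∀ i : Fin (n+1), (Matrix.toEuclideanLin M x₀) i = (M *ᵥ fun j => s j.succ) i :=
    fun i => rfl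
  have hx₀app : ∀ i : Fin (n+1), x₀ i = s i.succ := fun i => rfl
  have hadj00 : G.adjMatrix ℝ 0 0 = 0 := by simp
  have hcolsum : ∑ i : Fin (n+1), G.adjMatrix ℝ i.succ 0 = (G.degree 0 : ℝ) := by
    have hsymadj : ∀ i : Fin (n+1), G.adjMatrix ℝ i.succ 0 = G.adjMatrix ℝ 0 i.succ := by
      intro i
      simp [SimpleGraph.adjMatrix_apply, G.adj_comm]
    rw [Finset.sum_congr rfl (fun i _ => hsymadj i), hsucc 0, hadj00, sub_zero]
  have hinner : (inner ℝ ((Matrix.toEuclideanLin M) x₀) x₀ : ℝ) = (G.degree 0 : ℝ) := by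
    rw [PiLp.inner_apply]
    have hterm : ∀ i : Fin (n+1),
        (inner ℝ ((Matrix.toEuclideanLin M x₀) i) (x₀ i) : ℝ) = G.adjMatrix ℝ i.succ 0 := by
      intro i
      rw [RCLike.inner_apply, starRingEnd_apply, star_trivial, happ i, hx₀app i, hmul i]
      rw [mul_comm, sub_mul, div_mul_cancel₀ _ (hspos i.succ).ne', hssq i.succ]
      ring
    rw [Finset.sum_congr rfl (fun i _ => hterm i), hcolsum]
  -- the norm
  have hnorm : ‖x₀‖ ^ 2 = ∑ i : Fin (n+1), (G.degree i.succ : ℝ) := by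
    rw [← real_inner_self_eq_norm_sq, PiLp.inner_apply]
    refine Finset.sum_congr rfl (fun i _ => ?_)
    rw [RCLike.inner_apply, starRingEnd_apply, star_trivial, hx₀app i, hssq i.succ]
  -- positivity facts
  have hdminpos : 0 < dmin := by
    rw [hdmin]
    exact (Finset.lt_inf'_iff univ_nonempty).mpr fun i _ => hdeg i
  have hbound_nonneg : (0:ℝ) ≤ (dmax : ℝ) / (((n + 1 : ℕ) : ℝ) * (dmin : ℝ)) := by
    positivity
  -- comparison of the Rayleigh quotient with the bound
  have hsum_lb : ((n + 1 : ℕ) : ℝ) * (dmin : ℝ) ≤ ∑ i : Fin (n+1), (G.degree i.succ : ℝ) := by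
    have h1 : ∀ i : Fin (n+1), (dmin : ℝ) ≤ (G.degree i.succ : ℝ) := by
      intro i
      exact_mod_cast hdmin ▸ Finset.inf'_le (fun v => G.degree v) (Finset.mem_univ i.succ)
    calc ((n + 1 : ℕ) : ℝ) * (dmin : ℝ) = ∑ _i : Fin (n+1), (dmin : ℝ) := by
          simp [Finset.sum_const, Finset.card_univ, mul_comm]
      _ ≤ _ := Finset.sum_le_sum fun i _ => h1 i
  have hdeg0_ub : (G.degree 0 : ℝ) ≤ (dmax : ℝ) := by
    exact_mod_cast hdmax ▸ Finset.le_sup' (fun v => G.degree v) (Finset.mem_univ (0 : Fin (n+2)))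
  have hR : (inner ℝ ((Matrix.toEuclideanLin M) x₀) x₀ : ℝ) / ‖x₀‖ ^ 2
      ≤ (dmax : ℝ) / (((n + 1 : ℕ) : ℝ) * (dmin : ℝ)) := by
    rw [hinner, hnorm]
    refine div_le_div₀ (by positivity) hdeg0_ub ?_ hsum_lb
    positivity
  -- conclude
  by_cases hb : BddBelow (Set.range (fun x : {x : EuclideanSpace ℝ (Fin (n+1)) // x ≠ 0} =>
      RCLike.re (inner ℝ ((Matrix.toEuclideanLin M) x.1) x.1 : ℝ) / ‖x.1‖ ^ 2))
  · have hle : c ≤ RCLike.re (inner ℝ ((Matrix.toEuclideanLin M) x₀) x₀ : ℝ) / ‖x₀‖ ^ 2 := by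
      rw [hcdef]
      exact ciInf_le hb ⟨x₀, hx₀⟩
    rw [RCLike.re_to_real] at hle
    exact hlam.trans (hle.trans hR)
  · have hc0 : c = 0 := by
      rw [hcdef]
      exact Real.iInf_of_not_bddBelow hb
    rw [hc0] at hlam
    exact hlam.trans hbound_nonneg
end

section
/- With the setup of the grounded Laplacian, a sharper bound holds: λ̄₁ ≤ d₁ / ((N−1)·d_min), where d₁ is the degree of the grounded node. -/
open Matrix Finset

lemma isEig_of_mulVec {m : ℕ} {M : Matrix (Fin m) (Fin m) ℝ} {μ : ℝ} {v : Fin m → ℝ}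
    (hv : v ≠ 0) (h : M *ᵥ v = μ • v) : IsEig M μ := by
  apply Module.End.hasEigenvalue_of_hasEigenvector (x := v)
  refine ⟨?_, hv⟩
  rw [Module.End.mem_eigenspace_iff, Matrix.toLin'_apply, h]

lemma Lsym_symm {N : ℕ} (G : SimpleGraph (Fin N)) [DecidableRel G.Adj] (i j : Fin N) :
    Lsym G j i = Lsym G i j := by
  unfold Lsym
  rw [SimpleGraph.adjMatrix_apply, SimpleGraph.adjMatrix_apply, mul_comm]
  congr 1
  · by_cases h : i = j
    · subst h; rfl
    · rw [if_neg h, if_neg (Ne.symm h)]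
  · congr 1
    by_cases h : G.Adj i j
    · rw [if_pos h, if_pos h.symm]
    · rw [if_neg h, if_neg (fun h' => h h'.symm)]

/-- the sharper bound `λ̄₁ ≤ d₁ / ((N - 1) * d_min)` where `d₁` is the degree
of the grounded node (node `0`). -/
theorem grounded_lambda1_sharper_bound {n : ℕ} (G : SimpleGraph (Fin (n + 2)))
    [DecidableRel G.Adj] (hconn : G.Connected)
    (dmin : ℕ)
    (hdmin : dmin = univ.inf' univ_nonempty (fun i => G.degree i))
    (lam1 : ℝ)
    (heig : IsEig ((Lsym G).submatrix Fin.succ Fin.succ) lam1)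
    (hmin : ∀ μ : ℝ, IsEig ((Lsym G).submatrix Fin.succ Fin.succ) μ → lam1 ≤ μ) :
    lam1 ≤ (G.degree 0 : ℝ) / (((n + 1 : ℕ) : ℝ) * (dmin : ℝ)) := by
  set M := (Lsym G).submatrix Fin.succ Fin.succ with hMdef
  -- degrees are positive
  have hdeg : ∀ v : Fin (n + 2), 0 < G.degree v := by
    intro v
    rw [G.degree_pos_iff_exists_adj]
    obtain ⟨w, hw⟩ := exists_ne v
    obtain ⟨p⟩ := hconn v w
    cases p with
    | nil => exact absurd rfl hw.symm
    | cons h q => exact ⟨_, h⟩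
  have hD : ∀ v : Fin (n + 2), (0:ℝ) < (G.degree v : ℝ) := fun v => by
    exact_mod_cast hdeg v
  have hsq : ∀ v : Fin (n + 2), (0:ℝ) < Real.sqrt (G.degree v : ℝ) :=
    fun v => Real.sqrt_pos.mpr (hD v)
  -- M is Hermitian
  have hM : M.IsHermitian := by
    apply Matrix.ext
    intro i j
    simp only [conjTranspose_apply, submatrix_apply, star_trivial, hMdef]
    exact Lsym_symm G _ _
  -- shifted matrix is PSD
  have hH : (M - lam1 • 1).IsHermitian :=
    hM.sub (by rw [Matrix.IsHermitian, conjTranspose_smul, conjTranspose_one]; simp)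
  have heigs : ∀ i, 0 ≤ hH.eigenvalues i := by
    intro i
    have hb := hH.mulVec_eigenvectorBasis i
    have hbne : (⇑(hH.eigenvectorBasis i) : Fin (n + 1) → ℝ) ≠ 0 := by
      intro h0
      exact hH.eigenvectorBasis.orthonormal.ne_zero i (by ext j; exact congrFun h0 j)
    have hsub : (M - lam1 • 1) *ᵥ ⇑(hH.eigenvectorBasis i)
        = M *ᵥ ⇑(hH.eigenvectorBasis i) - lam1 • ⇑(hH.eigenvectorBasis i) := by
      rw [Matrix.sub_mulVec, Matrix.smul_mulVec, Matrix.one_mulVec]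
    rw [hsub] at hb
    have hMv : M *ᵥ ⇑(hH.eigenvectorBasis i)
        = (hH.eigenvalues i + lam1) • ⇑(hH.eigenvectorBasis i) := by
      rw [add_smul]
      exact sub_eq_iff_eq_add.mp hb
    have := hmin _ (isEig_of_mulVec hbne hMv)
    linarith
  have hPSD : (M - lam1 • 1).PosSemidef := hH.posSemidef_iff_eigenvalues_nonneg.mpr heigs
  -- test vector
  set x : Fin (n + 1) → ℝ := fun i => Real.sqrt (G.degree i.succ : ℝ) with hxdef
  have hq := hPSD.dotProduct_mulVec_nonneg x
  -- entrywise key identity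
  have key : ∀ u v : Fin (n + 2),
      Real.sqrt (G.degree u : ℝ) * (Lsym G u v * Real.sqrt (G.degree v : ℝ))
        = (if u = v then (G.degree u : ℝ) else 0) - G.adjMatrix ℝ u v := by
    intro u v
    have hm : Real.sqrt ((G.degree u : ℝ) * (G.degree v : ℝ))
        = Real.sqrt (G.degree u : ℝ) * Real.sqrt (G.degree v : ℝ) :=
      Real.sqrt_mul (hD u).le _
    unfold Lsym
    rw [hm, sub_mul, mul_sub]
    congr 1
    · by_cases h : u = v
      · subst h
        rw [if_pos rfl, if_pos rfl, one_mul, Real.mul_self_sqrt (hD u).le]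
      · rw [if_neg h, if_neg h, zero_mul, mul_zero]
    · have hsu : Real.sqrt (G.degree u : ℝ) ≠ 0 := (hsq u).ne'
      have hsv : Real.sqrt (G.degree v : ℝ) ≠ 0 := (hsq v).ne'
      field_simp
  -- row sums of adjacency matrix
  have hrowfull : ∀ u : Fin (n + 2), ∑ j, G.adjMatrix ℝ u j = (G.degree u : ℝ) := by
    intro u
    simpa [Matrix.mulVec, dotProduct, Function.const] using
      SimpleGraph.adjMatrix_mulVec_const_apply (G := G) (α := ℝ) (a := 1) (v := u)
  have hrow : ∀ u : Fin (n + 2),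
      ∑ j : Fin (n + 1), G.adjMatrix ℝ u j.succ = (G.degree u : ℝ) - G.adjMatrix ℝ u 0 := by
    intro u
    have h1 := hrowfull u
    rw [Fin.sum_univ_succ] at h1
    linarith
  -- quadratic form value
  have hQ : x ⬝ᵥ (M *ᵥ x) = (G.degree 0 : ℝ) := by
    have step1 : x ⬝ᵥ (M *ᵥ x)
        = ∑ i : Fin (n + 1), ∑ j : Fin (n + 1),
            ((if i.succ = j.succ then (G.degree i.succ : ℝ) else 0)
              - G.adjMatrix ℝ i.succ j.succ) := by
      simp only [dotProduct, Matrix.mulVec, dotProduct, hMdef, submatrix_apply, Finset.mul_sum]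
      refine Finset.sum_congr rfl fun i _ => Finset.sum_congr rfl fun j _ => ?_
      exact key i.succ j.succ
    rw [step1]
    have step2 : ∀ i : Fin (n + 1),
        ∑ j : Fin (n + 1), ((if i.succ = j.succ then (G.degree i.succ : ℝ) else 0)
              - G.adjMatrix ℝ i.succ j.succ) = G.adjMatrix ℝ i.succ 0 := by
      intro i
      rw [Finset.sum_sub_distrib, hrow]
      have : ∑ j : Fin (n + 1), (if i.succ = j.succ then (G.degree i.succ : ℝ) else 0)
          = (G.degree i.succ : ℝ) := by
        simp [Fin.succ_inj]
      rw [this]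
      ring
    rw [Finset.sum_congr rfl fun i _ => step2 i]
    have hcol : ∀ v : Fin (n + 2), G.adjMatrix ℝ v 0 = G.adjMatrix ℝ 0 v := by
      intro v; simp [SimpleGraph.adjMatrix_apply, G.adj_comm]
    rw [Finset.sum_congr rfl fun i _ => hcol i.succ]
    have h1 := hrowfull 0
    rw [Fin.sum_univ_succ] at h1
    have h00 : G.adjMatrix ℝ 0 0 = 0 := by simp
    rw [h00] at h1
    linarith [h1]
  -- norm squared value
  have hX : x ⬝ᵥ x = ∑ i : Fin (n + 1), (G.degree i.succ : ℝ) := by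
    unfold dotProduct
    refine Finset.sum_congr rfl fun i _ => ?_
    exact Real.mul_self_sqrt (hD i.succ).le
  -- lower bound on norm squared
  have hdminle : ∀ v : Fin (n + 2), (dmin : ℝ) ≤ (G.degree v : ℝ) := by
    intro v
    have : dmin ≤ G.degree v := hdmin ▸ Finset.inf'_le _ (mem_univ v)
    exact_mod_cast this
  have hSlb : ((n + 1 : ℕ) : ℝ) * (dmin : ℝ) ≤ x ⬝ᵥ x := by
    rw [hX]
    calc ((n + 1 : ℕ) : ℝ) * (dmin : ℝ) = ∑ _i : Fin (n + 1), (dmin : ℝ) := by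
          simp [Finset.sum_const, Fintype.card_fin]
      _ ≤ ∑ i : Fin (n + 1), (G.degree i.succ : ℝ) :=
          Finset.sum_le_sum fun i _ => hdminle i.succ
  have hdminpos : (0:ℝ) < (dmin : ℝ) := by
    obtain ⟨v, _, hv⟩ := Finset.exists_mem_eq_inf' (univ_nonempty) (fun i => G.degree i)
    have : 0 < dmin := by rw [hdmin, hv]; exact hdeg v
    exact_mod_cast this
  have hcpos : (0:ℝ) < ((n + 1 : ℕ) : ℝ) * (dmin : ℝ) := by positivity
  have hSpos : (0:ℝ) < x ⬝ᵥ x := lt_of_lt_of_le hcpos hSlb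
  -- put it together
  have hq' : lam1 * (x ⬝ᵥ x) ≤ (G.degree 0 : ℝ) := by
    have hexp : x ⬝ᵥ ((M - lam1 • 1) *ᵥ x) = x ⬝ᵥ (M *ᵥ x) - lam1 * (x ⬝ᵥ x) := by
      rw [Matrix.sub_mulVec, dotProduct_sub, Matrix.smul_mulVec, Matrix.one_mulVec,
        dotProduct_smul]
      simp [smul_eq_mul]
    simp only [star_trivial] at hq
    rw [hexp, hQ] at hq
    linarith
  have h1 : lam1 ≤ (G.degree 0 : ℝ) / (x ⬝ᵥ x) := (le_div_iff₀ hSpos).mpr hq'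
  refine h1.trans ?_
  exact div_le_div_of_nonneg_left (by positivity) hcpos hSlb
end

section
/- Let G be a simple undirected connected graph on N nodes with degrees bounded between d_min and d_max, and let L̄^(m) be the grounded symmetric normalized Laplacian obtained by removing m rows and the corresponding m columns (0 < m < N) from L_sym. Then the smallest eigenvalue satisfies λ̄₁^(m) ≤ m·d_max / ((N−m)·d_min). -/
open Matrix Finset

lemma Lsym_isHermitian {N : ℕ} (G : SimpleGraph (Fin N)) [DecidableRel G.Adj] :
    (Lsym G).IsHermitian := by
  ext i j
  simp only [Lsym, conjTranspose_apply, star_trivial, Matrix.transpose_apply,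
    SimpleGraph.adjMatrix_apply]
  rw [mul_comm ((G.degree j : ℝ))]
  congr 1
  · simp [eq_comm]
  · congr 1
    · simp [SimpleGraph.adj_comm]

lemma adj_row_sum {N : ℕ} (G : SimpleGraph (Fin N)) [DecidableRel G.Adj] (v : Fin N) :
    ∑ i, G.adjMatrix ℝ v i = (G.degree v : ℝ) := by
  simp [SimpleGraph.adjMatrix_apply, Finset.sum_boole, SimpleGraph.degree,
    SimpleGraph.neighborFinset_eq_filter]

lemma adj_col_sum {N : ℕ} (G : SimpleGraph (Fin N)) [DecidableRel G.Adj] (i : Fin N) :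
    ∑ v, G.adjMatrix ℝ v i = (G.degree i : ℝ) := by
  rw [← adj_row_sum G i]
  exact Finset.sum_congr rfl fun v _ => by
    rw [SimpleGraph.adjMatrix_apply, SimpleGraph.adjMatrix_apply]
    exact if_congr (G.adj_comm v i) rfl rfl

/-- grounding `m` nodes (removing the `m` rows and columns outside the range
of the injection `f : Fin (N - m) ↪ Fin N` of kept nodes, `0 < m < N`), the smallest
eigenvalue of the resulting grounded symmetric normalized Laplacian satisfies
`λ̄₁^{(m)} ≤ m·d_max / ((N - m)·d_min)`. -/
theorem grounded_m_nodes_lambda1_bound {N : ℕ} (G : SimpleGraph (Fin N))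
    [DecidableRel G.Adj] (hconn : G.Connected)
    (dmin dmax : ℝ)
    (hdmin : ∀ i, dmin ≤ (G.degree i : ℝ)) (hdmax : ∀ i, (G.degree i : ℝ) ≤ dmax)
    (hdminpos : 0 < dmin)
    (m : ℕ) (hm : 0 < m) (hmN : m < N)
    (f : Fin (N - m) ↪ Fin N)
    (lam1 : ℝ)
    (heig : IsEig ((Lsym G).submatrix f f) lam1)
    (hmin : ∀ μ : ℝ, IsEig ((Lsym G).submatrix f f) μ → lam1 ≤ μ) :
    lam1 ≤ (m : ℝ) * dmax / (((N - m : ℕ) : ℝ) * dmin) := by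
  classical
  have hNm : 0 < N - m := Nat.sub_pos_of_lt hmN
  haveI : Nonempty (Fin (N - m)) := ⟨⟨0, hNm⟩⟩
  set M := (Lsym G).submatrix f f with hMdef
  have hdeg : ∀ i, (0 : ℝ) < (G.degree i : ℝ) := fun i => lt_of_lt_of_le hdminpos (hdmin i)
  have hherm : M.IsHermitian := (Lsym_isHermitian G).submatrix f
  have hsym := Matrix.isHermitian_iff_isSymmetric.1 hherm
  set E := EuclideanSpace ℝ (Fin (N - m)) with hE
  haveI : Nontrivial E := by
    refine ⟨0, (WithLp.equiv 2 _).symm (fun _ => 1), fun h => ?_⟩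
    have h2 : (0 : Fin (N - m) → ℝ) = fun _ => 1 := by
      calc (0 : Fin (N - m) → ℝ) = (WithLp.equiv 2 _) (0 : E) := by simp
        _ = (WithLp.equiv 2 _) ((WithLp.equiv 2 _).symm (fun _ => (1:ℝ))) := by rw [h]
        _ = fun _ => 1 := by simp
    exact one_ne_zero (congrFun h2 ⟨0, hNm⟩).symm
  set T := Matrix.toEuclideanLin M with hT
  set sfun : Fin (N - m) → ℝ := fun j => Real.sqrt (G.degree (f j)) with hsfun
  set s : E := (WithLp.equiv 2 _).symm sfun with hs
  have hsfunpos : ∀ j, 0 < sfun j := fun j => Real.sqrt_pos.2 (hdeg (f j))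
  have hs0 : s ≠ 0 := by
    intro h
    have := congrArg (fun z => (WithLp.equiv 2 (Fin (N - m) → ℝ)) z ⟨0, hNm⟩) h
    simp only [hs] at this
    exact absurd this (ne_of_gt (hsfunpos ⟨0, hNm⟩))
  -- the minimal Rayleigh quotient is an eigenvalue
  have hev := hsym.hasEigenvalue_iInf_of_finiteDimensional
  rw [RCLike.ofReal_real_eq_id] at hev
  simp only [id_eq] at hev
  -- transfer the eigenvalue to `toLin' M`
  have hlam : lam1 ≤ ⨅ x : {x : E // x ≠ 0},
      RCLike.re (inner ℝ (T x) (x : E) : ℝ) / ‖(x : E)‖ ^ 2 := by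
    apply hmin
    obtain ⟨v, hv⟩ := hev.exists_hasEigenvector
    apply Module.End.hasEigenvalue_of_hasEigenvector (x := (WithLp.equiv 2 _) v)
    constructor
    · rw [Module.End.mem_eigenspace_iff]
      calc Matrix.toLin' M ((WithLp.equiv 2 _) v) = (WithLp.equiv 2 _) (T v) := rfl
        _ = (WithLp.equiv 2 _) ((⨅ x : {x : E // x ≠ 0},
              RCLike.re (inner ℝ (T x) (x : E) : ℝ) / ‖(x : E)‖ ^ 2) • v) := by
            rw [hv.apply_eq_smul]
        _ = _ := rfl
    · simpa using hv.right
  -- the infimum is at most the Rayleigh quotient of `s`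
  have hbdd : BddBelow (Set.range fun x : {x : E // x ≠ 0} =>
      RCLike.re (inner ℝ (T x) (x : E) : ℝ) / ‖(x : E)‖ ^ 2) := by
    refine ⟨-‖LinearMap.toContinuousLinearMap T‖, ?_⟩
    rintro r ⟨x, rfl⟩
    dsimp only
    have hxn : ‖(x : E)‖ ≠ 0 := norm_ne_zero_iff.2 x.2
    have hx : (0 : ℝ) < ‖(x : E)‖ ^ 2 := by positivity
    rw [RCLike.re_to_real, le_div_iff₀ hx]
    have h1 : |(inner ℝ (T (x : E)) (x : E) : ℝ)| ≤ ‖T (x : E)‖ * ‖(x : E)‖ :=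
      abs_real_inner_le_norm _ _
    have h2 : ‖T (x : E)‖ ≤ ‖LinearMap.toContinuousLinearMap T‖ * ‖(x : E)‖ := by
      simpa using (LinearMap.toContinuousLinearMap T).le_opNorm (x : E)
    nlinarith [neg_abs_le (inner ℝ (T (x : E)) (x : E) : ℝ), norm_nonneg (x : E),
      norm_nonneg (T (x : E)), abs_nonneg (inner ℝ (T (x : E)) (x : E) : ℝ)]
  have hQ : (⨅ x : {x : E // x ≠ 0},
        RCLike.re (inner ℝ (T x) (x : E) : ℝ) / ‖(x : E)‖ ^ 2)
      ≤ RCLike.re (inner ℝ (T s) (s : E) : ℝ) / ‖(s : E)‖ ^ 2 :=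
    ciInf_le hbdd (⟨s, hs0⟩ : {x : E // x ≠ 0})
  -- compute the numerator
  have hentry : ∀ j k : Fin (N - m), M j k * sfun k * sfun j
      = (if j = k then (G.degree (f j) : ℝ) else 0) - G.adjMatrix ℝ (f j) (f k) := by
    intro j k
    have hdj := hdeg (f j)
    have hdk := hdeg (f k)
    have hjn : Real.sqrt (G.degree (f j)) ≠ 0 := ne_of_gt (Real.sqrt_pos.2 hdj)
    have hkn : Real.sqrt (G.degree (f k)) ≠ 0 := ne_of_gt (Real.sqrt_pos.2 hdk)
    have hsq : Real.sqrt ((G.degree (f j) : ℝ) * (G.degree (f k) : ℝ))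
        = Real.sqrt (G.degree (f j)) * Real.sqrt (G.degree (f k)) :=
      Real.sqrt_mul (le_of_lt hdj) _
    simp only [hMdef, Matrix.submatrix_apply, Lsym, hsfun]
    rw [sub_mul, sub_mul]
    congr 1
    · by_cases h : j = k
      · subst h
        simp [Real.mul_self_sqrt (le_of_lt hdj)]
      · have h' : ¬ f j = f k := fun hh => h (f.injective hh)
        simp [h, h']
    · rw [hsq]
      by_cases hA : G.Adj (f j) (f k)
      · simp only [SimpleGraph.adjMatrix_apply, if_pos hA]
        field_simp
      · simp [SimpleGraph.adjMatrix_apply, hA]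
  set S : Finset (Fin N) := Finset.univ.image f with hSdef
  have hnum : (inner ℝ (T s) (s : E) : ℝ)
      = ∑ i ∈ Sᶜ, ∑ j, G.adjMatrix ℝ (f j) i := by
    have h1 : (inner ℝ (T s) (s : E) : ℝ) = ∑ j, (M *ᵥ sfun) j * sfun j := by
      rw [hT, hs, WithLp.equiv_symm_apply, Matrix.toEuclideanLin_apply_piLp_toLp]
      rw [PiLp.inner_apply]
      exact Finset.sum_congr rfl fun j _ => by
        simp [RCLike.inner_apply, WithLp.equiv_symm_apply, PiLp.toLp_apply, mul_comm]
    rw [h1]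
    calc ∑ j, (M *ᵥ sfun) j * sfun j
        = ∑ j, ∑ k, M j k * sfun k * sfun j := by
          simp_rw [Matrix.mulVec, dotProduct, Finset.sum_mul]
      _ = ∑ j, ((G.degree (f j) : ℝ) - ∑ k, G.adjMatrix ℝ (f j) (f k)) := by
          refine Finset.sum_congr rfl fun j _ => ?_
          simp_rw [hentry j]
          rw [Finset.sum_sub_distrib, Finset.sum_ite_eq, if_pos (Finset.mem_univ j)]
      _ = ∑ j, ∑ i ∈ Sᶜ, G.adjMatrix ℝ (f j) i := by
          refine Finset.sum_congr rfl fun j _ => ?_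
          have himg : ∑ i ∈ S, G.adjMatrix ℝ (f j) i = ∑ k, G.adjMatrix ℝ (f j) (f k) := by
            rw [hSdef]
            exact Finset.sum_image (fun a _ b _ h => f.injective h)
          rw [← himg, ← adj_row_sum G (f j), ← Finset.sum_add_sum_compl S]
          ring
      _ = ∑ i ∈ Sᶜ, ∑ j, G.adjMatrix ℝ (f j) i := Finset.sum_comm
  have hcard : (Sᶜ.card : ℕ) = m := by
    have hScard : S.card = N - m := by
      rw [hSdef, Finset.card_image_of_injective _ f.injective, Finset.card_univ,
        Fintype.card_fin]
    rw [Finset.card_compl, hScard, Fintype.card_fin, Nat.sub_sub_self (le_of_lt hmN)]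
  have hnum_le : (inner ℝ (T s) (s : E) : ℝ) ≤ (m : ℝ) * dmax := by
    rw [hnum]
    have hmax0 : (0:ℝ) ≤ dmax :=
      le_trans (le_of_lt hdminpos) (le_trans (hdmin (f ⟨0, hNm⟩)) (hdmax _))
    calc ∑ i ∈ Sᶜ, ∑ j, G.adjMatrix ℝ (f j) i
        ≤ ∑ i ∈ Sᶜ, dmax := by
          refine Finset.sum_le_sum fun i _ => ?_
          have himg : ∑ v ∈ S, G.adjMatrix ℝ v i = ∑ j, G.adjMatrix ℝ (f j) i := by
            rw [hSdef]
            exact Finset.sum_image (fun a _ b _ h => f.injective h)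
          rw [← himg]
          calc ∑ v ∈ S, G.adjMatrix ℝ v i
              ≤ ∑ v, G.adjMatrix ℝ v i := by
                refine Finset.sum_le_sum_of_subset_of_nonneg (Finset.subset_univ _)
                  fun v _ _ => ?_
                simp only [SimpleGraph.adjMatrix_apply]
                positivity
            _ = (G.degree i : ℝ) := adj_col_sum G i
            _ ≤ dmax := hdmax i
      _ = (Sᶜ.card : ℝ) * dmax := by rw [Finset.sum_const, nsmul_eq_mul]
      _ = (m : ℝ) * dmax := by rw [hcard]
  have hnum_nonneg : (0:ℝ) ≤ (inner ℝ (T s) (s : E) : ℝ) := by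
    rw [hnum]
    refine Finset.sum_nonneg fun i _ => Finset.sum_nonneg fun j _ => ?_
    simp only [SimpleGraph.adjMatrix_apply]
    positivity
  -- the denominator
  have hden : ‖(s : E)‖ ^ 2 = ∑ j, (G.degree (f j) : ℝ) := by
    rw [← real_inner_self_eq_norm_sq, PiLp.inner_apply]
    exact Finset.sum_congr rfl fun j _ => by
      simp [RCLike.inner_apply, hs, WithLp.equiv_symm_apply, PiLp.toLp_apply, hsfun,
        Real.mul_self_sqrt (le_of_lt (hdeg (f j)))]
  have hden_ge : ((N - m : ℕ) : ℝ) * dmin ≤ ‖(s : E)‖ ^ 2 := by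
    rw [hden]
    calc ((N - m : ℕ) : ℝ) * dmin = ∑ _j : Fin (N - m), dmin := by
          rw [Finset.sum_const, Finset.card_univ, Fintype.card_fin, nsmul_eq_mul]
      _ ≤ ∑ j, (G.degree (f j) : ℝ) := Finset.sum_le_sum fun j _ => hdmin (f j)
  have hdenpos : (0:ℝ) < ((N - m : ℕ) : ℝ) * dmin := by
    have : (0:ℝ) < ((N - m : ℕ) : ℝ) := by exact_mod_cast hNm
    positivity
  have hmax0 : (0:ℝ) ≤ (m : ℝ) * dmax := by
    have : (0:ℝ) ≤ dmax :=
      le_trans (le_of_lt hdminpos) (le_trans (hdmin (f ⟨0, hNm⟩)) (hdmax _))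
    positivity
  calc lam1 ≤ _ := hlam
    _ ≤ RCLike.re (inner ℝ (T s) (s : E) : ℝ) / ‖(s : E)‖ ^ 2 := hQ
    _ ≤ (m : ℝ) * dmax / (((N - m : ℕ) : ℝ) * dmin) := by
        rw [RCLike.re_to_real]
        exact div_le_div₀ hmax0 hnum_le hdenpos hden_ge
end

section
/- Let A, B be matrices with (A,B) controllable and suppose there exists a symmetric positive definite P and a gain K such that A − λ BK is Schur stable for all λ in a set containing the nonzero eigenvalues λ₂,…,λ_N of the normalized Laplacian L of a connected undirected graph. Then the multi-agent system x(k+1) = (I_N ⊗ A − L ⊗ BK)x(k) achieves consensus, i.e., x_i(k) − x_j(k) → 0 for all i,j; equivalently, the spectrum of I_N ⊗ A − L ⊗ BK equals the union of the spectra of A − λ_i BK for i = 1,…,N, where λ₁ = 0. -/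
open Matrix Finset Kronecker Polynomial Filter

/-- Random-walk normalized Laplacian: `L = I - D⁻¹ A`. -/
noncomputable def Lrw {N : ℕ} (G : SimpleGraph (Fin N)) [DecidableRel G.Adj] :
    Matrix (Fin N) (Fin N) ℝ := fun i j =>
  (if i = j then (1 : ℝ) else 0) - G.adjMatrix ℝ i j / (G.degree i : ℝ)

/-- Kalman rank condition: the pair `(A, B)` (single input) is controllable. -/
def Controllable {nn : ℕ} (A : Matrix (Fin nn) (Fin nn) ℝ)
    (B : Matrix (Fin nn) (Fin 1) ℝ) : Prop :=
  (Matrix.of fun (i : Fin nn) (p : Fin nn × Fin 1) => (A ^ (p.1 : ℕ) * B) i p.2).rank = nn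

/-- A real matrix is Schur stable: all its (complex) eigenvalues have modulus `< 1`. -/
def SchurStable {nn : ℕ} (M : Matrix (Fin nn) (Fin nn) ℝ) : Prop :=
  ∀ μ ∈ spectrum ℂ (M.map Complex.ofReal), ‖μ‖ < 1

/-! ### Auxiliary lemmas -/

section Decay
open scoped ENNReal NNReal
attribute [local instance] Matrix.linftyOpNormedRing Matrix.linftyOpNormedAlgebra

/-- Powers of a Schur stable matrix tend to zero entrywise. -/
lemma schur_pow_tendsto {n : ℕ} {M : Matrix (Fin n) (Fin n) ℝ} (h : SchurStable M) (i j : Fin n) :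
    Tendsto (fun k : ℕ => (M ^ k) i j) atTop (nhds 0) := by
  haveI : CompleteSpace (Matrix (Fin n) (Fin n) ℂ) :=
    inferInstance
  haveI : Nontrivial (Matrix (Fin n) (Fin n) ℂ) := by
    refine ⟨0, 1, fun hme => ?_⟩
    have h2 := congrFun (congrFun hme i) i
    simp [Matrix.one_apply] at h2
  set a := M.map (Complex.ofReal) with ha
  have hρ : spectralRadius ℂ a < ((1 : ℝ≥0) : ℝ≥0∞) := by
    apply spectrum.spectralRadius_lt_of_forall_lt
    intro z hz
    have h1 : ‖z‖ < 1 := by exact h z hz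
    exact_mod_cast h1
  obtain ⟨r, hr1, hr2⟩ := exists_between hρ
  have hrtop : r ≠ ⊤ := ne_top_of_lt (lt_of_lt_of_le hr2 le_top)
  have hg := spectrum.pow_nnnorm_pow_one_div_tendsto_nhds_spectralRadius a
  have hev : ∀ᶠ k : ℕ in atTop, ((‖a ^ k‖₊ : ℝ≥0∞)) ^ (1 / (k:ℝ)) < r :=
    hg.eventually_lt_const hr1
  set rr := r.toReal with hrr
  have hrr1 : rr < 1 := by
    have := ENNReal.toReal_lt_toReal hrtop (by norm_num : (1:ℝ≥0∞) ≠ ⊤) |>.mpr hr2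
    simpa using this
  have hbound : ∀ᶠ k : ℕ in atTop, ‖(M ^ k) i j‖ ≤ rr ^ k := by
    filter_upwards [hev, Filter.eventually_ge_atTop 1] with k hk hk1
    have hkne : (k : ℝ) ≠ 0 := by positivity
    have h3 : (‖a ^ k‖₊ : ℝ≥0∞) ≤ r ^ k := by
      have := ENNReal.rpow_le_rpow hk.le (by positivity : (0:ℝ) ≤ (k:ℝ))
      rwa [← ENNReal.rpow_mul, one_div, inv_mul_cancel₀ hkne, ENNReal.rpow_one,
        ENNReal.rpow_natCast] at this
    have h4 : ‖a ^ k‖ ≤ rr ^ k := by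
      have := ENNReal.toReal_le_toReal (by simp) (by simp [hrtop]) |>.mpr h3
      simpa [ENNReal.toReal_pow] using this
    have h5 : a ^ k = (M ^ k).map Complex.ofReal := by
      have := map_pow (Complex.ofRealHom.mapMatrix) M k
      exact this.symm
    have h6 : ‖(M ^ k) i j‖ = ‖(a ^ k) i j‖ := by
      rw [h5]; simp [Matrix.map_apply]
    rw [h6]
    refine le_trans ?_ h4
    have h7 : ‖(a ^ k) i j‖₊ ≤ ‖a ^ k‖₊ := by
      rw [Matrix.linfty_opNNNorm_def]
      exact le_trans (Finset.single_le_sum (f := fun j' => ‖(a ^ k) i j'‖₊)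
        (fun _ _ => zero_le) (Finset.mem_univ j))
        (Finset.le_sup (f := fun r => ∑ j' : Fin n, ‖(a ^ k) r j'‖₊) (Finset.mem_univ i))
    exact_mod_cast h7
  have hrr0 : 0 ≤ rr := ENNReal.toReal_nonneg
  exact squeeze_zero_norm' hbound (tendsto_pow_atTop_nhds_zero_of_lt_one hrr0 hrr1)

end Decay

/-- On a connected graph with positive degrees, a vector in the kernel of the random-walk
Laplacian is constant. -/
lemma Lrw_kernel_const {N : ℕ} (G : SimpleGraph (Fin N)) [DecidableRel G.Adj]
    (hconn : G.Connected) (hdeg : ∀ v, 0 < G.degree v) (x : Fin N → ℝ)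
    (hx : Lrw G *ᵥ x = 0) : ∀ i j, x i = x j := by
  have hsum : ∀ v, (G.degree v : ℝ) * x v = ∑ u ∈ G.neighborFinset v, x u := by
    intro v
    have h1 := congrFun hx v
    have hdv : ((G.degree v : ℝ)) ≠ 0 := by exact_mod_cast (hdeg v).ne'
    have h2 : (Lrw G *ᵥ x) v = x v - (∑ w : Fin N, G.adjMatrix ℝ v w * x w) / (G.degree v : ℝ) := by
      simp only [Lrw, mulVec, dotProduct, sub_mul, Finset.sum_sub_distrib, ite_mul, one_mul,
        zero_mul, Finset.sum_ite_eq, Finset.mem_univ, if_true, div_mul_eq_mul_div,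
        ← Finset.sum_div]
    rw [h2] at h1
    have h3 : (∑ w : Fin N, G.adjMatrix ℝ v w * x w) = ∑ u ∈ G.neighborFinset v, x u := by
      have := G.adjMatrix_mulVec_apply (α := ℝ) v x
      simpa [mulVec, dotProduct] using this
    rw [h3] at h1
    field_simp at h1
    simp only [Pi.zero_apply, mul_zero] at h1; linarith [h1]
  have hne : (Finset.univ : Finset (Fin N)).Nonempty := by
    haveI := hconn.nonempty
    exact Finset.univ_nonempty
  obtain ⟨i0, -, hi0⟩ := Finset.exists_max_image Finset.univ x hne
  have key : ∀ v w, G.Adj v w → x v = x i0 → x w = x i0 := by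
    intro v w hvw hv
    have h4 : ∑ u ∈ G.neighborFinset v, (x i0 - x u) = 0 := by
      rw [Finset.sum_sub_distrib, Finset.sum_const, ← hsum v, hv]
      rw [nsmul_eq_mul, SimpleGraph.card_neighborFinset_eq_degree]
      ring
    have h5 := (Finset.sum_eq_zero_iff_of_nonneg (fun u _ => by
      have := hi0 u (Finset.mem_univ u); linarith)).mp h4
    have h6 := h5 w (by rwa [SimpleGraph.mem_neighborFinset])
    linarith
  have step : ∀ (u v : Fin N) (p : G.Walk u v), x u = x i0 → x v = x i0 := by
    intro u v p
    induction p with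
    | nil => exact id
    | cons h p ih => intro hu; exact ih (key _ _ h hu)
  intro i j
  obtain ⟨p⟩ := hconn.preconnected i0 i
  obtain ⟨q⟩ := hconn.preconnected i0 j
  rw [step i0 i p rfl, step i0 j q rfl]

section Blk

variable {R : Type*} [CommRing R] {N n : ℕ}

/-- The block diagonal matrix with blocks `f i`, indexed with the block index first. -/
noncomputable def blk (f : Fin N → Matrix (Fin n) (Fin n) R) :
    Matrix (Fin N × Fin n) (Fin N × Fin n) R :=
  (Matrix.blockDiagonal f).submatrix (Equiv.prodComm (Fin N) (Fin n))
    (Equiv.prodComm (Fin N) (Fin n))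

lemma blk_apply (f : Fin N → Matrix (Fin n) (Fin n) R) (i j : Fin N) (a b : Fin n) :
    blk f (i, a) (j, b) = if i = j then f i a b else 0 := by
  simp [blk, Matrix.blockDiagonal_apply]

lemma blk_mul (f g : Fin N → Matrix (Fin n) (Fin n) R) :
    blk f * blk g = blk (fun i => f i * g i) := by
  unfold blk
  rw [Matrix.submatrix_mul_equiv, Matrix.blockDiagonal_mul]

lemma blk_one : blk (fun _ : Fin N => (1 : Matrix (Fin n) (Fin n) R)) = 1 := by
  unfold blk
  rw [show (fun _ : Fin N => (1 : Matrix (Fin n) (Fin n) R)) = 1 from rfl,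
    Matrix.blockDiagonal_one, Matrix.submatrix_one_equiv]

lemma blk_det (f : Fin N → Matrix (Fin n) (Fin n) R) :
    (blk f).det = ∏ i, (f i).det := by
  unfold blk
  rw [Matrix.det_submatrix_equiv_self, Matrix.det_blockDiagonal]

lemma blk_map {S : Type*} [CommRing S] (f : Fin N → Matrix (Fin n) (Fin n) R) (g : R →+* S) :
    (blk f).map g = blk (fun i => (f i).map g) := by
  ext ⟨i, a⟩ ⟨j, b⟩
  simp only [Matrix.map_apply, blk_apply]
  by_cases h : i = j <;> simp [h]

lemma charpoly_diag (d : Fin N → R) :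
    (Matrix.diagonal d).charpoly = ∏ i, (X - C (d i)) := by
  have h : charmatrix (Matrix.diagonal d) = Matrix.diagonal (fun i => X - C (d i)) := by
    ext i j
    by_cases h : i = j
    · subst h; rw [charmatrix_apply_eq, Matrix.diagonal_apply_eq, Matrix.diagonal_apply_eq]
    · rw [charmatrix_apply_ne _ _ _ h, Matrix.diagonal_apply_ne _ h,
        Matrix.diagonal_apply_ne _ h, map_zero, neg_zero]
  rw [Matrix.charpoly, h, Matrix.det_diagonal]

lemma charpoly_conj (V W D : Matrix (Fin N) (Fin N) R) (hVW : V * W = 1) :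
    (V * D * W).charpoly = D.charpoly := by
  have hmap : (V.map C) * (W.map C) = (1 : Matrix (Fin N) (Fin N) R[X]) := by
    rw [← Matrix.map_mul, hVW, Matrix.map_one C (map_zero C) (map_one C)]
  have hc : charmatrix (V * D * W) = (V.map C) * charmatrix D * (W.map C) := by
    rw [charmatrix, charmatrix, mul_sub, sub_mul]
    congr 1
    · symm
      calc V.map C * (scalar (Fin N)) X * W.map C
          = V.map C * (W.map C * (scalar (Fin N)) X) := by
            rw [mul_assoc, (Matrix.scalar_commute X (fun r' => Commute.all X r') (W.map C)).eq]
        _ = (scalar (Fin N)) X := by rw [← mul_assoc, hmap, one_mul]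
    · simp only [RingHom.mapMatrix_apply]
      rw [← Matrix.map_mul, ← Matrix.map_mul]
  rw [Matrix.charpoly, Matrix.charpoly, hc, Matrix.det_mul, Matrix.det_mul]
  have h2 : (V.map C).det * (W.map C).det = 1 := by
    rw [← Matrix.det_mul, hmap, Matrix.det_one]
  calc (V.map C).det * (charmatrix D).det * (W.map C).det
      = (charmatrix D).det * ((V.map C).det * (W.map C).det) := by ring
    _ = (charmatrix D).det := by rw [h2, mul_one]

end Blk

/-- Membership in the spectrum of a complex matrix via the determinant. -/
lemma spec_mem_iff_det {k : Type*} [Fintype k] [DecidableEq k]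
    (X : Matrix k k ℂ) (μ : ℂ) :
    μ ∈ spectrum ℂ X ↔ (μ • (1 : Matrix k k ℂ) - X).det = 0 := by
  rw [spectrum.mem_iff, Algebra.algebraMap_eq_smul_one, Matrix.isUnit_iff_isUnit_det,
    isUnit_iff_ne_zero, not_ne_iff]

/-- if `(A,B)` is controllable and there are a symmetric positive definite
`P` and a gain `K` such that `A − λᵢ B K` is Schur stable for all nonzero eigenvalues
`λ₂, …, λ_N` of the normalized Laplacian `L` of a connected undirected graph
(eigenvalues enumerated by `lam`, with `lam 0 = λ₁ = 0`), then the multi-agent system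
`x(k+1) = (I_N ⊗ A − L ⊗ BK) x(k)` achieves consensus (`xᵢ(k) − xⱼ(k) → 0`);
equivalently, the spectrum of `I_N ⊗ A − L ⊗ BK` is the union of the spectra of
`A − λᵢ B K`, `i = 1, …, N`. -/
theorem consensus_and_kronecker_spectrum {N nn : ℕ} (G : SimpleGraph (Fin N))
    [DecidableRel G.Adj] (hconn : G.Connected)
    (A : Matrix (Fin nn) (Fin nn) ℝ) (B : Matrix (Fin nn) (Fin 1) ℝ)
    (K : Matrix (Fin 1) (Fin nn) ℝ)
    (hctrb : Controllable A B)
    (P : Matrix (Fin nn) (Fin nn) ℝ) (hP : P.PosDef)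
    (lam : Fin N → ℝ) (hlam_mono : Monotone lam)
    (hchar : (Lrw G).charpoly = ∏ i, (X - C (lam i)))
    (hlam0 : ∀ h0 : 0 < N, lam ⟨0, h0⟩ = 0)
    (hschur : ∀ i : Fin N, lam i ≠ 0 → SchurStable (A - lam i • (B * K))) :
    (∀ x0 : Fin N × Fin nn → ℝ, ∀ i j : Fin N, ∀ a : Fin nn,
        Tendsto
          (fun k : ℕ =>
            ((((1 : Matrix (Fin N) (Fin N) ℝ) ⊗ₖ A - (Lrw G) ⊗ₖ (B * K)) ^ k) *ᵥ x0) (i, a)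
              - ((((1 : Matrix (Fin N) (Fin N) ℝ) ⊗ₖ A - (Lrw G) ⊗ₖ (B * K)) ^ k) *ᵥ x0) (j, a))
          atTop (nhds 0)) ∧
    spectrum ℂ
        (((1 : Matrix (Fin N) (Fin N) ℝ) ⊗ₖ A - (Lrw G) ⊗ₖ (B * K)).map Complex.ofReal)
      = ⋃ i : Fin N, spectrum ℂ ((A - lam i • (B * K)).map Complex.ofReal) := by
  classical
  haveI hNE : Nonempty (Fin N) := hconn.nonempty
  have hN2 : 2 ≤ N := by
    rcases Nat.lt_or_ge N 2 with hlt | hge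
    · exfalso
      interval_cases N
      · exact hNE.elim (fun x => x.elim0)
      · have h1 : Lrw G = 1 := by
          ext i j
          have hij : i = j := Subsingleton.elim i j
          subst hij
          simp [Lrw, Matrix.one_apply]
        have h2 := hchar
        rw [h1] at h2
        have h3 : (1 : Matrix (Fin 1) (Fin 1) ℝ).charpoly = X - C 1 := by
          have hdd : (1 : Matrix (Fin 1) (Fin 1) ℝ) = Matrix.diagonal (fun _ => (1:ℝ)) := by
            rw [Matrix.diagonal_one]
          rw [hdd, charpoly_diag]
          simp
        have h5 : lam 0 = 0 := hlam0 one_pos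
        rw [h3, Fin.prod_univ_one, h5] at h2
        have h6 := congrArg (Polynomial.eval 0) h2
        simp at h6
    · exact hge
  have hdeg : ∀ v : Fin N, 0 < G.degree v := by
    intro v
    rw [G.degree_pos_iff_exists_adj]
    obtain ⟨w, hw⟩ := Fintype.exists_ne_of_one_lt_card (by simp; omega) v
    obtain ⟨p⟩ := hconn.preconnected v w
    cases p with
    | nil => exact absurd rfl hw
    | cons h q => exact ⟨_, h⟩
  -- diagonalization of the Laplacian
  set d : Fin N → ℝ := fun v => (G.degree v : ℝ) with hd_def
  have hd : ∀ v, 0 < d v := fun v => by simp only [hd_def]; exact_mod_cast hdeg v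
  set s : Fin N → ℝ := fun v => Real.sqrt (d v) with hs_def
  have hs : ∀ v, 0 < s v := fun v => Real.sqrt_pos.mpr (hd v)
  set S : Matrix (Fin N) (Fin N) ℝ := Matrix.diagonal s with hS_def
  set Si : Matrix (Fin N) (Fin N) ℝ := Matrix.diagonal (fun v => (s v)⁻¹) with hSi_def
  have hSSi : S * Si = 1 := by
    rw [hS_def, hSi_def, Matrix.diagonal_mul_diagonal,
      show (fun v => s v * (s v)⁻¹) = fun _ => (1:ℝ) from
        funext fun v => mul_inv_cancel₀ (hs v).ne', Matrix.diagonal_one]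
  have hSiS : Si * S = 1 := by
    rw [hS_def, hSi_def, Matrix.diagonal_mul_diagonal,
      show (fun v => (s v)⁻¹ * s v) = fun _ => (1:ℝ) from
        funext fun v => inv_mul_cancel₀ (hs v).ne', Matrix.diagonal_one]
  set Lc : Matrix (Fin N) (Fin N) ℝ := Matrix.diagonal d - G.adjMatrix ℝ with hLc_def
  set Lsym : Matrix (Fin N) (Fin N) ℝ := Si * Lc * Si with hLsym_def
  have hLcsymm : ∀ i j, Lc i j = Lc j i := by
    intro i j
    by_cases h : i = j
    · rw [h]
    · simp [hLc_def, Matrix.diagonal_apply_ne _ h, Matrix.diagonal_apply_ne _ (Ne.symm h),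
        SimpleGraph.adjMatrix_apply, G.adj_comm]
  have hentry : ∀ i j, Lsym i j = (s i)⁻¹ * Lc i j * (s j)⁻¹ := by
    intro i j
    rw [hLsym_def, hSi_def, Matrix.mul_diagonal, Matrix.diagonal_mul]
  have hherm : Lsym.IsHermitian := by
    rw [Matrix.IsHermitian]
    ext i j
    rw [Matrix.conjTranspose_apply, star_trivial, hentry i j, hentry j i, hLcsymm i j]
    ring
  have hspec := hherm.spectral_theorem
  set U : Matrix (Fin N) (Fin N) ℝ := (hherm.eigenvectorUnitary : Matrix (Fin N) (Fin N) ℝ)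
    with hU_def
  set evs : Fin N → ℝ := hherm.eigenvalues with hevs_def
  have hdiagid : Matrix.diagonal ((RCLike.ofReal : ℝ → ℝ) ∘ evs) = Matrix.diagonal evs := by
    congr 1
  rw [hdiagid] at hspec
  have hUsU : U * star U = 1 := Matrix.mem_unitaryGroup_iff.mp hherm.eigenvectorUnitary.2
  have hsUU : star U * U = 1 := Matrix.mem_unitaryGroup_iff'.mp hherm.eigenvectorUnitary.2
  set V : Matrix (Fin N) (Fin N) ℝ := Si * U with hV_def
  set W : Matrix (Fin N) (Fin N) ℝ := star U * S with hW_def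
  have hVW : V * W = 1 := by
    rw [hV_def, hW_def, mul_assoc, ← mul_assoc U, hUsU, one_mul, hSiS]
  have hWV : W * V = 1 := by
    rw [hW_def, hV_def, mul_assoc, ← mul_assoc S, hSSi, one_mul, hsUU]
  have hLrwVW : Lrw G = V * Matrix.diagonal evs * W := by
    have h1 : Lrw G = Matrix.diagonal (fun v => (d v)⁻¹) * Lc := by
      ext i j
      rw [Matrix.diagonal_mul]
      by_cases h : i = j
      · subst h
        have hdne : d i ≠ 0 := (hd i).ne'
        simp only [Lrw, hLc_def, Matrix.sub_apply, Matrix.diagonal_apply_eq, if_pos rfl]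
        simp [SimpleGraph.adjMatrix_apply]
        exact (inv_mul_cancel₀ hdne).symm
      · simp only [Lrw, hLc_def, Matrix.sub_apply, Matrix.diagonal_apply_ne _ h, if_neg h]
        ring
    have h2a : (fun v => (d v)⁻¹) = fun v => (s v)⁻¹ * (s v)⁻¹ := by
      funext v
      rw [← mul_inv]
      simp only [hs_def]
      rw [Real.mul_self_sqrt (hd v).le]
    have h2 : Matrix.diagonal (fun v => (d v)⁻¹) = Si * Si := by
      rw [hSi_def, Matrix.diagonal_mul_diagonal, h2a]
    calc Lrw G = Si * Si * Lc := by rw [h1, h2]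
      _ = Si * Lsym * S := by
          rw [hLsym_def]
          simp only [mul_assoc]
          rw [hSiS, mul_one]
      _ = V * Matrix.diagonal evs * W := by
          rw [hspec, Unitary.conjStarAlgAut_apply, hV_def, hW_def]
          simp only [mul_assoc]
          rfl
  -- block dynamics
  set BK : Matrix (Fin nn) (Fin nn) ℝ := B * K with hBK_def
  set g : Fin N → Matrix (Fin nn) (Fin nn) ℝ := fun m => A - evs m • BK with hg_def
  set M : Matrix (Fin N × Fin nn) (Fin N × Fin nn) ℝ :=
    (1 : Matrix (Fin N) (Fin N) ℝ) ⊗ₖ A - Lrw G ⊗ₖ BK with hM_def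
  have hblk : (1 : Matrix (Fin N) (Fin N) ℝ) ⊗ₖ A - (Matrix.diagonal evs) ⊗ₖ BK = blk g := by
    ext ⟨i, a⟩ ⟨j, b⟩
    rw [blk_apply]
    simp only [Matrix.sub_apply, Matrix.kroneckerMap_apply, Matrix.one_apply,
      Matrix.diagonal_apply, hg_def, Matrix.smul_apply, smul_eq_mul]
    by_cases h : i = j <;> simp [h]
  have hMfac : M = (V ⊗ₖ (1 : Matrix (Fin nn) (Fin nn) ℝ)) * blk g
      * (W ⊗ₖ (1 : Matrix (Fin nn) (Fin nn) ℝ)) := by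
    rw [hM_def, ← hblk, Matrix.mul_sub, Matrix.sub_mul]
    congr 1
    · simp only [← Matrix.mul_kronecker_mul, one_mul, mul_one, hVW]
    · simp only [← Matrix.mul_kronecker_mul, one_mul, mul_one]
      rw [hLrwVW]
  have hmid : (W ⊗ₖ (1 : Matrix (Fin nn) (Fin nn) ℝ)) * (V ⊗ₖ (1 : Matrix (Fin nn) (Fin nn) ℝ))
      = 1 := by
    simp only [← Matrix.mul_kronecker_mul, mul_one]
    rw [hWV, Matrix.one_kronecker_one]
  have hMk : ∀ k : ℕ, M ^ k = (V ⊗ₖ (1 : Matrix (Fin nn) (Fin nn) ℝ))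
      * blk (fun m => g m ^ k) * (W ⊗ₖ (1 : Matrix (Fin nn) (Fin nn) ℝ)) := by
    intro k
    induction k with
    | zero =>
      rw [pow_zero, show (fun m : Fin N => g m ^ 0) = fun _ => (1 : Matrix (Fin nn) (Fin nn) ℝ)
          from funext fun m => pow_zero _, blk_one, mul_one,
        ← Matrix.mul_kronecker_mul, hVW, mul_one, Matrix.one_kronecker_one]
    | succ k ih =>
      rw [pow_succ, ih, hMfac]
      simp only [mul_assoc]
      rw [← mul_assoc (W ⊗ₖ (1 : Matrix (Fin nn) (Fin nn) ℝ))
          (V ⊗ₖ (1 : Matrix (Fin nn) (Fin nn) ℝ)), hmid, one_mul,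
        ← mul_assoc (blk fun m => g m ^ k) (blk g), blk_mul]
      simp only [← pow_succ]
  -- eigenvalue multiset identification
  have hcpL : (Lrw G).charpoly = ∏ m, (X - C (evs m)) := by
    rw [hLrwVW, charpoly_conj V W _ hVW, charpoly_diag]
  have hprodeq : (∏ m, (X - C (evs m)) : ℝ[X]) = ∏ i, (X - C (lam i)) := by
    rw [← hcpL, hchar]
  have hms : Multiset.map evs Finset.univ.val = Multiset.map lam Finset.univ.val := by
    have h1 : ((Multiset.map evs Finset.univ.val).map (fun r : ℝ => X - C r)).prod
        = ((Multiset.map lam Finset.univ.val).map (fun r : ℝ => X - C r)).prod := by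
      rw [Multiset.map_map, Multiset.map_map]
      rw [Finset.prod_eq_multiset_prod, Finset.prod_eq_multiset_prod] at hprodeq
      exact hprodeq
    calc Multiset.map evs Finset.univ.val
        = (((Multiset.map evs Finset.univ.val).map (fun r : ℝ => X - C r)).prod).roots :=
          (Polynomial.roots_multiset_prod_X_sub_C _).symm
      _ = (((Multiset.map lam Finset.univ.val).map (fun r : ℝ => X - C r)).prod).roots := by
          rw [h1]
      _ = Multiset.map lam Finset.univ.val := Polynomial.roots_multiset_prod_X_sub_C _
  have hexist : ∀ m, ∃ i0 : Fin N, lam i0 = evs m := by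
    intro m
    have h1 : evs m ∈ Multiset.map lam Finset.univ.val := by
      rw [← hms]
      exact Multiset.mem_map_of_mem _ (Finset.mem_univ m)
    obtain ⟨i0, -, h2⟩ := Multiset.mem_map.mp h1
    exact ⟨i0, h2⟩
  have hexist' : ∀ i0, ∃ m, evs m = lam i0 := by
    intro i0
    have h1 : lam i0 ∈ Multiset.map evs Finset.univ.val := by
      rw [hms]
      exact Multiset.mem_map_of_mem _ (Finset.mem_univ i0)
    obtain ⟨m, -, h2⟩ := Multiset.mem_map.mp h1
    exact ⟨m, h2⟩
  have hschur' : ∀ m, evs m ≠ 0 → SchurStable (g m) := by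
    intro m hm
    obtain ⟨i0, hi0⟩ := hexist m
    simp only [hg_def]
    rw [← hi0]
    exact hschur i0 (by rw [hi0]; exact hm)
  constructor
  · -- consensus
    intro x0 i j a
    set y : Fin N × Fin nn → ℝ := (W ⊗ₖ (1 : Matrix (Fin nn) (Fin nn) ℝ)) *ᵥ x0 with hy_def
    have hVmul : ∀ (w : Fin N × Fin nn → ℝ) (i' : Fin N) (a' : Fin nn),
        ((V ⊗ₖ (1 : Matrix (Fin nn) (Fin nn) ℝ)) *ᵥ w) (i', a') = ∑ m, V i' m * w (m, a') := by
      intro w i' a'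
      simp only [Matrix.mulVec, dotProduct, Fintype.sum_prod_type,
        Matrix.kroneckerMap_apply, Matrix.one_apply, mul_ite, mul_one, mul_zero, ite_mul,
        zero_mul, Finset.sum_ite_eq, Finset.mem_univ, if_true]
    have hblkmul : ∀ (k : ℕ) (m : Fin N) (a' : Fin nn),
        (blk (fun m' => g m' ^ k) *ᵥ y) (m, a') = ∑ b, (g m ^ k) a' b * y (m, b) := by
      intro k m a'
      simp [Matrix.mulVec, dotProduct, Fintype.sum_prod_type, blk_apply,
        ite_mul, zero_mul, Finset.sum_ite_irrel, Finset.sum_const_zero, Finset.sum_ite_eq]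
    have hform : ∀ (k : ℕ) (i' : Fin N) (a' : Fin nn),
        (M ^ k *ᵥ x0) (i', a') = ∑ m, V i' m * (∑ b, (g m ^ k) a' b * y (m, b)) := by
      intro k i' a'
      rw [hMk k, ← Matrix.mulVec_mulVec, ← Matrix.mulVec_mulVec, hVmul]
      exact Finset.sum_congr rfl fun m _ => by rw [hblkmul k m a']
    have hdiff : ∀ k : ℕ, (M ^ k *ᵥ x0) (i, a) - (M ^ k *ᵥ x0) (j, a)
        = ∑ m, (V i m - V j m) * (∑ b, (g m ^ k) a b * y (m, b)) := by
      intro k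
      rw [hform k i a, hform k j a, ← Finset.sum_sub_distrib]
      exact Finset.sum_congr rfl fun m _ => by ring
    have htend : Tendsto
        (fun k : ℕ => ∑ m, (V i m - V j m) * (∑ b, (g m ^ k) a b * y (m, b)))
        atTop (nhds 0) := by
      have h0 : (0:ℝ) = ∑ _m : Fin N, (0:ℝ) := by simp
      rw [h0]
      apply tendsto_finset_sum
      intro m _
      by_cases hm : evs m = 0
      · have hker : Lrw G *ᵥ (fun r => V r m) = 0 := by
          have h1 : Lrw G * V = V * Matrix.diagonal evs := by
            rw [hLrwVW, mul_assoc, hWV, mul_one]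
          ext r
          have h2 : (Lrw G *ᵥ fun r' => V r' m) r = (Lrw G * V) r m := by
            simp [Matrix.mulVec, dotProduct, Matrix.mul_apply]
          rw [Pi.zero_apply, h2, h1, Matrix.mul_diagonal, hm, mul_zero]
        have hcol : V i m = V j m := Lrw_kernel_const G hconn hdeg _ hker i j
        have hzero : ∀ k : ℕ, (V i m - V j m) * (∑ b, (g m ^ k) a b * y (m, b)) = 0 := by
          intro k; rw [hcol]; ring
        simp only [hzero]
        exact tendsto_const_nhds
      · have hSch := hschur' m hm
        have hsum : Tendsto (fun k : ℕ => ∑ b, (g m ^ k) a b * y (m, b)) atTop (nhds 0) := by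
          have h0' : (0:ℝ) = ∑ _b : Fin nn, (0:ℝ) := by simp
          rw [h0']
          apply tendsto_finset_sum
          intro b _
          simpa using (schur_pow_tendsto hSch a b).mul_const (y (m, b))
        simpa using hsum.const_mul (V i m - V j m)
    exact Tendsto.congr (fun k => (hdiff k).symm) htend
  · -- spectrum
    have hVcWc : ((V ⊗ₖ (1 : Matrix (Fin nn) (Fin nn) ℝ)).map Complex.ofRealHom)
        * ((W ⊗ₖ (1 : Matrix (Fin nn) (Fin nn) ℝ)).map Complex.ofRealHom) = 1 := by
      rw [← Matrix.map_mul, ← Matrix.mul_kronecker_mul, hVW, mul_one, Matrix.one_kronecker_one,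
        Matrix.map_one Complex.ofRealHom (map_zero _) (map_one _)]
    have hWcVc : ((W ⊗ₖ (1 : Matrix (Fin nn) (Fin nn) ℝ)).map Complex.ofRealHom)
        * ((V ⊗ₖ (1 : Matrix (Fin nn) (Fin nn) ℝ)).map Complex.ofRealHom) = 1 := by
      rw [← Matrix.map_mul, hmid, Matrix.map_one Complex.ofRealHom (map_zero _) (map_one _)]
    set u : (Matrix (Fin N × Fin nn) (Fin N × Fin nn) ℂ)ˣ :=
      ⟨(V ⊗ₖ (1 : Matrix (Fin nn) (Fin nn) ℝ)).map Complex.ofRealHom,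
        (W ⊗ₖ (1 : Matrix (Fin nn) (Fin nn) ℝ)).map Complex.ofRealHom, hVcWc, hWcVc⟩ with hu_def
    have hMc : M.map Complex.ofReal = (u : Matrix (Fin N × Fin nn) (Fin N × Fin nn) ℂ)
        * ((blk g).map Complex.ofRealHom) * ((u⁻¹ : _ˣ) : Matrix (Fin N × Fin nn) (Fin N × Fin nn) ℂ) := by
      rw [show M.map Complex.ofReal = M.map Complex.ofRealHom from rfl, hMfac,
        Matrix.map_mul, Matrix.map_mul]
      rfl
    rw [hMc, spectrum.units_conjugate, blk_map g Complex.ofRealHom]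
    ext μ
    simp only [Set.mem_iUnion]
    rw [spec_mem_iff_det]
    have hsmul : μ • (1 : Matrix (Fin N × Fin nn) (Fin N × Fin nn) ℂ)
        - blk (fun m => (g m).map Complex.ofRealHom)
        = blk (fun m => μ • (1 : Matrix (Fin nn) (Fin nn) ℂ) - (g m).map Complex.ofRealHom) := by
      ext ⟨i, a⟩ ⟨j, b⟩
      simp only [Matrix.sub_apply, Matrix.smul_apply, Matrix.one_apply, blk_apply,
        smul_eq_mul, Prod.mk.injEq]
      by_cases h : i = j
      · subst h
        by_cases hab : a = b <;> simp [hab]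
      · simp [h]
    rw [hsmul, blk_det, Finset.prod_eq_zero_iff]
    constructor
    · rintro ⟨m, -, hdm⟩
      obtain ⟨i0, hi0⟩ := hexist m
      refine ⟨i0, ?_⟩
      rw [show ((A - lam i0 • BK).map Complex.ofReal : Matrix (Fin nn) (Fin nn) ℂ)
          = (g m).map Complex.ofRealHom by simp only [hg_def]; rw [← hi0]; rfl]
      rw [spec_mem_iff_det]
      exact hdm
    · rintro ⟨i0, hi0mem⟩
      obtain ⟨m, hm⟩ := hexist' i0
      refine ⟨m, Finset.mem_univ m, ?_⟩
      rw [show ((g m).map Complex.ofRealHom : Matrix (Fin nn) (Fin nn) ℂ)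
          = (A - lam i0 • BK).map Complex.ofReal by simp only [hg_def]; rw [hm]; rfl]
      rw [← spec_mem_iff_det]
      exact hi0mem
end
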